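/- For all positive integers L and integers a, the identity ∑_{k≥0} O_{L,k}(q) · [2k+1 choose k−a]_q = q^{4T(a)} · [2L choose L−2a−1]_q holds, where O_{L,k}(q) = ∑_{m=0}^{L} q^{2T(k)+2T(m+k)} [L choose m]_q [L−m choose 2k+1]_q and T(j) = j(j+1)/2. -/

import Mathlib

open LaurentPolynomial Finset

noncomputable section



/-- The Gaussian binomial coefficient `[m choose n]_q` as a polynomial in `q`,
defined via the `q`-Pascal recurrence; it equals `(q;q)_m/((q;q)_n (q;q)_{m-n})`
for `0 ≤ n ≤ m`. -/
def gb : ℕ → ℕ → Polynomial ℤ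
  | _, 0 => 1
  | 0, _ + 1 => 0
  | m + 1, n + 1 => gb m n + Polynomial.X ^ (n + 1) * gb m (n + 1)

theorem gb_zero : ∀ m n : ℕ, m < n → gb m n = 0 := by
  intro m
  induction m with
  | zero => intro n h; match n, h with | n+1, _ => rfl
  | succ m ih =>
    intro n h
    match n, h with
    | n+1, h =>
      show gb m n + Polynomial.X ^ (n+1) * gb m (n+1) = 0
      rw [ih n (by omega), ih (n+1) (by omega)]; ring

theorem gb_self : ∀ m : ℕ, gb m m = 1 := by
  intro m
  induction m with
  | zero => rfl
  | succ m ih =>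
    show gb m m + Polynomial.X ^ (m+1) * gb m (m+1) = 1
    rw [ih, gb_zero m (m+1) (by omega)]; ring

def qfac (n : ℕ) : Polynomial ℤ := ∏ i ∈ range n, (1 - Polynomial.X ^ (i+1))

theorem qfac_ne_zero (n : ℕ) : qfac n ≠ 0 := by
  apply prod_ne_zero_iff.2
  intro i _
  intro h
  have := congrArg (fun p => Polynomial.coeff p 0) h
  simp [Polynomial.coeff_X_pow] at this

theorem qfac_succ (n : ℕ) : qfac (n+1) = qfac n * (1 - Polynomial.X ^ (n+1)) := by
  rw [qfac, prod_range_succ]; rfl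

theorem gb_mul_qfac : ∀ m n : ℕ, n ≤ m → gb m n * (qfac n * qfac (m - n)) = qfac m := by
  intro m
  induction m with
  | zero => intro n h; interval_cases n; simp [gb, qfac]
  | succ m ih =>
    intro n h
    match n with
    | 0 => simp [gb, qfac]
    | n+1 =>
      rcases Nat.lt_or_ge n m with hnm | hnm
      · show (gb m n + Polynomial.X ^ (n+1) * gb m (n+1)) * _ = _
        have h1 : m + 1 - (n + 1) = m - n := by omega
        have h2 : m - n = (m - (n+1)) + 1 := by omega
        rw [h1, add_mul, qfac_succ n, h2, qfac_succ (m - (n+1))]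
        have e1 : gb m n * (qfac n * (1 - Polynomial.X ^ (n + 1)) *
            (qfac (m - (n + 1)) * (1 - Polynomial.X ^ (m - (n + 1) + 1)))) =
            (gb m n * (qfac n * qfac (m - n))) * (1 - Polynomial.X ^ (n+1)) := by
          rw [h2, qfac_succ]
          ring
        rw [e1, ih n (by omega)]
        have e2 : Polynomial.X ^ (n + 1) * gb m (n + 1) *
            (qfac n * (1 - Polynomial.X ^ (n + 1)) *
            (qfac (m - (n + 1)) * (1 - Polynomial.X ^ (m - (n + 1) + 1)))) =
            (gb m (n+1) * (qfac (n+1) * qfac (m - (n+1)))) *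
              (Polynomial.X ^ (n+1) * (1 - Polynomial.X ^ (m - (n+1) + 1))) := by
          rw [qfac_succ]
          ring
        rw [e2, ih (n+1) (by omega)]
        have h3 : m - (n+1) + 1 + (n+1) = m + 1 := by omega
        rw [qfac_succ m]
        have : ((1 : Polynomial ℤ) - Polynomial.X ^ (n + 1)) + (Polynomial.X ^ (n+1) *
            (1 - Polynomial.X ^ (m - (n+1) + 1))) = 1 - Polynomial.X ^ (m+1) := by
          have : Polynomial.X ^ (n+1) * Polynomial.X ^ (m - (n+1) + 1) =
              (Polynomial.X : Polynomial ℤ) ^ (m+1) := by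
            rw [← pow_add]; congr 1; omega
          linear_combination -this
        rw [← mul_add, this]
      · have hnm' : n = m := by omega
        subst hnm'
        rw [gb_self]
        simp [qfac]
theorem gb_symm {m n : ℕ} (h : n ≤ m) : gb m n = gb m (m - n) := by
  have h2 : m - n ≤ m := Nat.sub_le m n
  have := gb_mul_qfac m n h
  have h3 := gb_mul_qfac m (m - n) h2
  rw [Nat.sub_sub_self h] at h3
  have : gb m n * (qfac n * qfac (m - n)) = gb m (m - n) * (qfac n * qfac (m - n)) := by
    rw [this, mul_comm (qfac (m-n)) (qfac n)] at *
    rw [this, h3]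
  exact mul_right_cancel₀ (mul_ne_zero (qfac_ne_zero n) (qfac_ne_zero (m-n))) this

theorem gb_tri {n b c : ℕ} (h : b + c ≤ n) :
    gb n b * gb (n - b) c = gb n (b + c) * gb (b + c) b := by
  have key : ∀ x y : Polynomial ℤ,
      x * (qfac b * qfac c * qfac (n - b - c)) = y * (qfac b * qfac c * qfac (n - b - c)) →
      x = y := fun x y hx => mul_right_cancel₀
    (mul_ne_zero (mul_ne_zero (qfac_ne_zero b) (qfac_ne_zero c)) (qfac_ne_zero (n-b-c))) hx
  apply key
  have e1 : gb n b * gb (n - b) c * (qfac b * qfac c * qfac (n - b - c)) =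
      (gb (n-b) c * (qfac c * qfac ((n-b) - c))) * gb n b * qfac b := by
    have : n - b - c = (n - b) - c := rfl
    rw [this]; ring
  rw [e1, gb_mul_qfac (n-b) c (by omega)]
  have e2 : qfac (n - b) * gb n b * qfac b = gb n b * (qfac b * qfac (n - b)) := by ring
  rw [e2, gb_mul_qfac n b (by omega)]
  have e3 : gb n (b + c) * gb (b + c) b * (qfac b * qfac c * qfac (n - b - c)) =
      (gb (b+c) b * (qfac b * qfac ((b+c) - b))) * gb n (b+c) * qfac (n - b - c) := by
    have : (b + c) - b = c := by omega
    rw [this]; ring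
  rw [e3, gb_mul_qfac (b+c) b (by omega)]
  have e4 : qfac (b + c) * gb n (b + c) * qfac (n - b - c) =
      gb n (b+c) * (qfac (b+c) * qfac (n - (b+c))) := by
    have : n - b - c = n - (b + c) := by omega
    rw [this]; ring
  rw [e4, gb_mul_qfac n (b+c) h]
theorem gb_zero_right : ∀ m : ℕ, gb m 0 = 1 := fun m => by cases m <;> rfl

/-- `[m choose n]_q` with integer indices, zero unless `0 ≤ n ≤ m`,
viewed as a Laurent polynomial in `q`. -/
def qbin (m n : ℤ) : LaurentPolynomial ℤ :=
  if 0 ≤ n ∧ n ≤ m then (gb m.toNat n.toNat).toLaurent else 0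

theorem qbin_eq_gb {m n : ℤ} (h1 : 0 ≤ n) (h2 : n ≤ m) :
    qbin m n = (gb m.toNat n.toNat).toLaurent := if_pos ⟨h1, h2⟩

theorem qbin_eq_zero_of_neg {m n : ℤ} (h : n < 0) : qbin m n = 0 :=
  if_neg (by omega)

theorem qbin_eq_zero_of_gt {m n : ℤ} (h : m < n) : qbin m n = 0 :=
  if_neg (by omega)

theorem qbin_zero_right {m : ℤ} (h : 0 ≤ m) : qbin m 0 = 1 := by
  rw [qbin_eq_gb le_rfl h]
  have e : (0:ℤ).toNat = 0 := rfl
  rw [e, gb_zero_right, Polynomial.toLaurent_one]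

theorem qbin_self {m : ℤ} (h : 0 ≤ m) : qbin m m = 1 := by
  rw [qbin_eq_gb h le_rfl, gb_self, Polynomial.toLaurent_one]

theorem qbin_symm (m n : ℤ) : qbin m n = qbin m (m - n) := by
  by_cases h : 0 ≤ n ∧ n ≤ m
  · rw [qbin_eq_gb h.1 h.2, qbin_eq_gb (by omega) (by omega)]
    have e : (m - n).toNat = m.toNat - n.toNat := by omega
    rw [e, ← gb_symm (by omega)]
  · rw [qbin, qbin, if_neg h, if_neg (by omega)]

theorem qbin_tri (n b c : ℤ) :
    qbin n b * qbin (n - b) c = qbin n (b + c) * qbin (b + c) b := by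
  by_cases hb : 0 ≤ b
  · by_cases hc : 0 ≤ c
    · by_cases h : b + c ≤ n
      · rw [qbin_eq_gb hb (by omega), qbin_eq_gb hc (by omega),
          qbin_eq_gb (by omega) h, qbin_eq_gb hb (by omega),
          ← map_mul, ← map_mul]
        congr 1
        have e1 : (n - b).toNat = n.toNat - b.toNat := by omega
        have e2 : (b + c).toNat = b.toNat + c.toNat := by omega
        rw [e1, e2, gb_tri (by omega)]
      · rw [qbin_eq_zero_of_gt (show n < b + c by omega), zero_mul]
        by_cases hbn : b ≤ n
        · rw [qbin_eq_zero_of_gt (show n - b < c by omega), mul_zero]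
        · rw [qbin_eq_zero_of_gt (show n < b by omega), zero_mul]
    · rw [qbin_eq_zero_of_neg (show c < 0 by omega), mul_zero,
        qbin_eq_zero_of_gt (show b + c < b by omega), mul_zero]
  · rw [qbin_eq_zero_of_neg (show b < 0 by omega), zero_mul,
      qbin_eq_zero_of_neg (show b < 0 by omega), mul_zero]

theorem gb_pascal2 {m n : ℕ} (h : n ≤ m) :
    gb (m+1) (n+1) = Polynomial.X ^ (m - n) * gb m n + gb m (n+1) := by
  rcases Nat.lt_or_ge n m with hlt | hge
  · have e0 : gb (m+1) (n+1) = gb (m+1) ((m+1) - (n+1)) := gb_symm (by omega)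
    have e1 : (m+1) - (n+1) = (m - n - 1) + 1 := by omega
    rw [e0, e1]
    show gb m (m - n - 1) + Polynomial.X ^ (m - n - 1 + 1) * gb m (m - n - 1 + 1) = _
    have e2 : gb m (m - n - 1) = gb m (m - (m - n - 1)) := gb_symm (by omega)
    have e3 : m - (m - n - 1) = n + 1 := by omega
    have e4 : m - n - 1 + 1 = m - n := by omega
    have e5 : gb m (m - n) = gb m n := by
      rw [gb_symm (show m - n ≤ m by omega)]
      congr 1; omega
    rw [e2, e3, e4, e5]; ring
  · have : n = m := by omega
    subst this
    rw [gb_self, Nat.sub_self, pow_zero, one_mul, gb_zero n (n+1) (by omega), gb_self]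
    ring

theorem qbin_pascal2 (m : ℕ) (n : ℤ) :
    qbin ((m:ℤ)+1) n = T ((m:ℤ) + 1 - n) * qbin m (n-1) + qbin m n := by
  rcases lt_trichotomy n 0 with hn | hn | hn
  · rw [qbin_eq_zero_of_neg hn, qbin_eq_zero_of_neg (show n - 1 < 0 by omega),
      qbin_eq_zero_of_neg hn, mul_zero, add_zero]
  · subst hn
    rw [qbin_zero_right (by omega), qbin_zero_right (by omega),
      qbin_eq_zero_of_neg (by omega), mul_zero, zero_add]
  · rcases lt_trichotomy n ((m:ℤ)+1) with hnm | hnm | hnm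
    · -- 1 ≤ n ≤ m
      rw [qbin_eq_gb (by omega) (by omega), qbin_eq_gb (by omega) (by omega),
        qbin_eq_gb (by omega) (by omega)]
      have em : ((m:ℤ)).toNat = m := by omega
      have e1 : ((m:ℤ)+1).toNat = m + 1 := by omega
      have e2 : n.toNat = (n-1).toNat + 1 := by omega
      have e3 : (n - 1).toNat ≤ m := by omega
      rw [em, e1, e2, gb_pascal2 e3, map_add, map_mul, Polynomial.toLaurent_X_pow]
      have e4 : ((m - (n-1).toNat : ℕ) : ℤ) = (m:ℤ) + 1 - n := by omega
      rw [e4]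
    · subst hnm
      rw [qbin_self (by omega), qbin_eq_zero_of_gt (show (m:ℤ) < (m:ℤ)+1 by omega),
        add_zero, show (m:ℤ)+1-((m:ℤ)+1) = 0 by ring, show (m:ℤ)+1-1 = (m:ℤ) by ring,
        T_zero, one_mul, qbin_self (by omega)]
    · rw [qbin_eq_zero_of_gt hnm, qbin_eq_zero_of_gt (show (m:ℤ) < n - 1 by omega),
        qbin_eq_zero_of_gt (show (m:ℤ) < n by omega), mul_zero, add_zero]
theorem Vlem : ∀ (N M : ℕ) (d : ℤ),
    ∑ j ∈ range (N+1), T ((j:ℤ)*((j:ℤ)+d)) * (qbin M ((j:ℤ)+d) * qbin N j) =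
      qbin ((M:ℤ)+(N:ℤ)) ((M:ℤ)-d) := by
  intro N
  induction N with
  | zero =>
    intro M d
    rw [sum_range_one]
    norm_num
    rw [qbin_self (by omega : (0:ℤ) ≤ 0), mul_one, ← qbin_symm]
  | succ N ih =>
    intro M d
    have step : ∀ j ∈ range (N+2),
        T ((j:ℤ)*((j:ℤ)+d)) * (qbin M ((j:ℤ)+d) * qbin (N+1:ℕ) j) =
        T ((j:ℤ)*((j:ℤ)+d)) * (qbin M ((j:ℤ)+d) * (T ((N:ℤ)+1-j) * qbin N ((j:ℤ)-1)))
        + T ((j:ℤ)*((j:ℤ)+d)) * (qbin M ((j:ℤ)+d) * qbin N j) := by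
      intro j _
      have : qbin ((N:ℕ)+1:ℤ) (j:ℤ) = T ((N:ℤ)+1-j) * qbin N ((j:ℤ)-1) + qbin N j := by
        have := qbin_pascal2 N (j:ℤ)
        rw [← this]
      push_cast
      push_cast at this
      rw [this]
      ring
    rw [sum_congr rfl step, sum_add_distrib]
    -- second sum: top term vanishes, gives ih d
    have s2 : ∑ j ∈ range (N+2), T ((j:ℤ)*((j:ℤ)+d)) * (qbin M ((j:ℤ)+d) * qbin N j)
        = qbin ((M:ℤ)+(N:ℤ)) ((M:ℤ)-d) := by
      rw [sum_range_succ, qbin_eq_zero_of_gt (show (N:ℤ) < ((N+1:ℕ):ℤ) by push_cast; omega)]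
      rw [mul_zero, mul_zero, add_zero, ih M d]
    -- first sum: reindex
    have s1 : ∑ j ∈ range (N+2),
        T ((j:ℤ)*((j:ℤ)+d)) * (qbin M ((j:ℤ)+d) * (T ((N:ℤ)+1-j) * qbin N ((j:ℤ)-1)))
        = T ((N:ℤ)+d+1) * qbin ((M:ℤ)+(N:ℤ)) ((M:ℤ)-(d+1)) := by
      rw [Finset.sum_range_succ']
      rw [qbin_eq_zero_of_neg (show ((0:ℕ):ℤ)-1 < 0 by norm_num)]
      rw [mul_zero, mul_zero, mul_zero, add_zero]
      have reidx : ∀ j ∈ range (N+1),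
          T (((j+1:ℕ):ℤ)*(((j+1:ℕ):ℤ)+d)) *
            (qbin M (((j+1:ℕ):ℤ)+d) * (T ((N:ℤ)+1-((j+1:ℕ):ℤ)) * qbin N (((j+1:ℕ):ℤ)-1)))
          = T ((N:ℤ)+d+1) *
            (T ((j:ℤ)*((j:ℤ)+(d+1))) * (qbin M ((j:ℤ)+(d+1)) * qbin N j)) := by
        intro j _
        push_cast
        rw [show ((j:ℤ)+1)+d = (j:ℤ)+(d+1) by ring, show ((j:ℤ)+1)-1 = (j:ℤ) by ring]
        have hT : (T (((j:ℤ)+1)*((j:ℤ)+(d+1))) : LaurentPolynomial ℤ) * T ((N:ℤ)+1-((j:ℤ)+1))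
            = T ((N:ℤ)+d+1) * T ((j:ℤ)*((j:ℤ)+(d+1))) := by
          rw [← T_add, ← T_add]; congr 1; ring
        calc T (((j:ℤ)+1)*((j:ℤ)+(d+1))) *
              (qbin M ((j:ℤ)+(d+1)) * (T ((N:ℤ)+1-((j:ℤ)+1)) * qbin N j))
            = (T (((j:ℤ)+1)*((j:ℤ)+(d+1))) * T ((N:ℤ)+1-((j:ℤ)+1))) *
              (qbin M ((j:ℤ)+(d+1)) * qbin N j) := by ring
          _ = (T ((N:ℤ)+d+1) * T ((j:ℤ)*((j:ℤ)+(d+1)))) *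
              (qbin M ((j:ℤ)+(d+1)) * qbin N j) := by rw [hT]
          _ = _ := by ring
      rw [sum_congr rfl reidx, ← mul_sum, ih M (d+1)]
    rw [s1, s2]
    -- RHS via Pascal
    have : ((M:ℤ)+((N+1:ℕ):ℤ)) = ((M+N:ℕ):ℤ) + 1 := by push_cast; ring
    rw [this, qbin_pascal2 (M+N) ((M:ℤ)-d)]
    rw [show ((M+N:ℕ):ℤ) + 1 - ((M:ℤ)-d) = (N:ℤ)+d+1 by push_cast; ring]
    rw [show (M:ℤ)-d-1 = (M:ℤ)-(d+1) by ring]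
    rw [show ((M+N:ℕ):ℤ) = (M:ℤ)+(N:ℤ) by push_cast; ring]
/-- The triangular number `T(j) = j(j+1)/2`. -/
def tri (j : ℤ) : ℤ := j * (j + 1) / 2

theorem two_tri (j : ℤ) : 2 * tri j = j * (j + 1) := by
  have h : (2:ℤ) ∣ j * (j + 1) := (Int.even_mul_succ_self j).two_dvd
  exact Int.mul_ediv_cancel' h

theorem tri_reflect (a : ℤ) : tri (-a - 1) = tri a := by
  unfold tri
  congr 1
  ring

theorem gb_toLaurent (M N : ℕ) : (gb M N).toLaurent = qbin M N := by
  by_cases h : N ≤ M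
  · rw [qbin_eq_gb (by positivity) (by exact_mod_cast h)]
    congr 1 <;> simp
  · rw [gb_zero M N (by omega), map_zero,
      qbin_eq_zero_of_gt (by exact_mod_cast Nat.lt_of_not_le h)]

def Fb (L : ℕ) (d : ℤ) (x y : ℤ) : LaurentPolynomial ℤ :=
  T (x * (x + d) + y * (y + d)) * (qbin L x * (qbin x y * qbin ((L:ℤ) - x) (y + d)))

theorem perterm (L k m : ℕ) (a : ℤ) (hm : m ≤ L) :
    T (2 * tri (k:ℤ) + 2 * tri ((m:ℤ) + (k:ℤ))) * (gb L m).toLaurent *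
        (gb (L - m) (2 * k + 1)).toLaurent * qbin (2 * (k:ℤ) + 1) ((k:ℤ) - a)
      = T (2 * (a * (a + 1))) * Fb L (2 * a + 1) ((m:ℤ) + (k:ℤ) - a) ((k:ℤ) - a) := by
  set x : ℤ := (m:ℤ) + (k:ℤ) - a with hx
  set y : ℤ := (k:ℤ) - a with hy
  -- convert gb's to qbin's
  rw [gb_toLaurent L m, gb_toLaurent (L - m) (2 * k + 1)]
  have c1 : ((L - m : ℕ) : ℤ) = (L:ℤ) - m := by omega
  have c2 : ((2 * k + 1 : ℕ) : ℤ) = 2 * (k:ℤ) + 1 := by push_cast; ring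
  rw [c1, c2]
  -- binomial manipulations
  have h1 : qbin ((L:ℤ) - m) (2 * (k:ℤ) + 1) * qbin (2 * (k:ℤ) + 1) y
      = qbin ((L:ℤ) - m) y * qbin ((L:ℤ) - m - y) (y + (2 * a + 1)) := by
    have := qbin_tri ((L:ℤ) - m) y (y + (2 * a + 1))
    rw [show y + (y + (2 * a + 1)) = 2 * (k:ℤ) + 1 by rw [hy]; ring] at this
    exact this.symm
  have h2 : qbin L (m:ℤ) * qbin ((L:ℤ) - m) y = qbin L x * qbin x (m:ℤ) := by
    have := qbin_tri (L:ℤ) (m:ℤ) y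
    rw [show (m:ℤ) + y = x by rw [hx, hy]; ring] at this
    exact this
  have h3 : qbin x (m:ℤ) = qbin x y := by
    rw [qbin_symm]
    congr 1
    rw [hx, hy]; ring
  have h4 : (L:ℤ) - m - y = (L:ℤ) - x := by rw [hx, hy]; ring
  have hT : (T (2 * tri (k:ℤ) + 2 * tri ((m:ℤ) + (k:ℤ))) : LaurentPolynomial ℤ)
      = T (2 * (a * (a + 1))) * T (x * (x + (2 * a + 1)) + y * (y + (2 * a + 1))) := by
    rw [← T_add]
    congr 1
    rw [show 2 * tri (k:ℤ) = (k:ℤ) * ((k:ℤ) + 1) from two_tri _,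
      show 2 * tri ((m:ℤ) + (k:ℤ)) = ((m:ℤ) + (k:ℤ)) * (((m:ℤ) + (k:ℤ)) + 1) from two_tri _,
      hx, hy]
    ring
  calc T (2 * tri (k:ℤ) + 2 * tri ((m:ℤ) + (k:ℤ))) * qbin L (m:ℤ) *
        qbin ((L:ℤ) - m) (2 * (k:ℤ) + 1) * qbin (2 * (k:ℤ) + 1) y
      = T (2 * tri (k:ℤ) + 2 * tri ((m:ℤ) + (k:ℤ))) * qbin L (m:ℤ) *
        (qbin ((L:ℤ) - m) (2 * (k:ℤ) + 1) * qbin (2 * (k:ℤ) + 1) y) := by ring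
    _ = T (2 * tri (k:ℤ) + 2 * tri ((m:ℤ) + (k:ℤ))) *
        ((qbin L (m:ℤ) * qbin ((L:ℤ) - m) y) * qbin ((L:ℤ) - m - y) (y + (2 * a + 1))) := by
        rw [h1]; ring
    _ = T (2 * tri (k:ℤ) + 2 * tri ((m:ℤ) + (k:ℤ))) *
        ((qbin L x * qbin x y) * qbin ((L:ℤ) - x) (y + (2 * a + 1))) := by
        rw [h2, h3, h4]
    _ = T (2 * (a * (a + 1))) * Fb L (2 * a + 1) x y := by
        rw [Fb, hT]; ring
/-- `O_{L,k}(q) = ∑_{m=0}^{L} q^{2T(k)+2T(m+k)} [L choose m]_q [L-m choose 2k+1]_q`. -/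
def Opoly (L k : ℕ) : LaurentPolynomial ℤ :=
  ∑ m ∈ Finset.range (L + 1),
    T (2 * tri k + 2 * tri (m + k)) * (gb L m).toLaurent * (gb (L - m) (2 * k + 1)).toLaurent

theorem sum_eq_sum_of_support {α : Type*} [DecidableEq α] {s t : Finset α}
    {f : α → LaurentPolynomial ℤ}
    (hs : ∀ p ∈ s, p ∉ t → f p = 0) (ht : ∀ p ∈ t, p ∉ s → f p = 0) :
    ∑ p ∈ s, f p = ∑ p ∈ t, f p := by
  have h1 : ∑ p ∈ s, f p = ∑ p ∈ s ∪ t, f p := by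
    apply Finset.sum_subset Finset.subset_union_left
    intro x hx hxs
    exact ht x (by rcases Finset.mem_union.1 hx with h | h; exact absurd h hxs; exact h) hxs
  have h2 : ∑ p ∈ t, f p = ∑ p ∈ s ∪ t, f p := by
    apply Finset.sum_subset Finset.subset_union_right
    intro x hx hxt
    exact hs x (by rcases Finset.mem_union.1 hx with h | h; exact h; exact absurd h hxt) hxt
  rw [h1, h2]

theorem qbin_ne_zero {m n : ℤ} (h : qbin m n ≠ 0) : 0 ≤ n ∧ n ≤ m := by
  by_contra hc
  rcases not_and_or.1 hc with h1 | h1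
  · exact h (qbin_eq_zero_of_neg (by omega))
  · exact h (qbin_eq_zero_of_gt (by omega))

theorem Fb_eq_zero {L : ℕ} {d x y : ℤ}
    (h : ¬(0 ≤ y ∧ y ≤ x ∧ x ≤ (L:ℤ) ∧ y + d ≤ (L:ℤ) - x)) : Fb L d x y = 0 := by
  unfold Fb
  by_cases h1 : 0 ≤ y
  · by_cases h2 : y ≤ x
    · by_cases h3 : x ≤ (L:ℤ)
      · rw [qbin_eq_zero_of_gt (show (L:ℤ) - x < y + d by omega)]
        ring
      · rw [qbin_eq_zero_of_gt (show (L:ℤ) < x by omega)]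
        ring
    · rw [qbin_eq_zero_of_gt (show x < y by omega)]
      ring
  · rw [qbin_eq_zero_of_neg (show y < 0 by omega)]
    ring

theorem main_nonneg (L : ℕ) (a : ℤ) (ha : 0 ≤ a) :
    ∑ᶠ k : ℕ, Opoly L k * qbin (2 * k + 1) ((k : ℤ) - a) =
      T (4 * tri a) * qbin (2 * L) ((L : ℤ) - 2 * a - 1) := by
  set d : ℤ := 2 * a + 1 with hd
  -- Step A : finsum to finite sum over range L
  have hOz : ∀ k : ℕ, L ≤ k → Opoly L k = 0 := by
    intro k hk
    apply Finset.sum_eq_zero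
    intro m hm
    rw [gb_zero (L - m) (2 * k + 1) (by omega), map_zero, mul_zero]
  have hA : ∑ᶠ k : ℕ, Opoly L k * qbin (2 * k + 1) ((k : ℤ) - a)
      = ∑ k ∈ range L, Opoly L k * qbin (2 * k + 1) ((k : ℤ) - a) := by
    apply finsum_eq_finset_sum_of_support_subset
    intro k hk
    simp only [Function.mem_support] at hk
    simp only [coe_range, Set.mem_Iio]
    by_contra hkL
    exact hk (by rw [hOz k (by omega), zero_mul])
  rw [hA]
  -- Step B : expand Opoly and rewrite each term
  have hB : ∀ k ∈ range L, Opoly L k * qbin (2 * k + 1) ((k : ℤ) - a)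
      = ∑ m ∈ range (L + 1),
          T (2 * (a * (a + 1))) * Fb L d ((m:ℤ) + (k:ℤ) - a) ((k:ℤ) - a) := by
    intro k _
    rw [Opoly, sum_mul]
    apply sum_congr rfl
    intro m hm
    have hmL : m ≤ L := by
      have := mem_range.1 hm; omega
    have := perterm L k m a hmL
    rw [hd, ← this]
  rw [sum_congr rfl hB]
  -- Step C : pull out the constant, convert to a sum over a product finset
  have hC : ∑ k ∈ range L, ∑ m ∈ range (L + 1),
      T (2 * (a * (a + 1))) * Fb L d ((m:ℤ) + (k:ℤ) - a) ((k:ℤ) - a)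
      = T (2 * (a * (a + 1))) *
        ∑ p ∈ (range L) ×ˢ (range (L + 1)), Fb L d ((p.2:ℤ) + (p.1:ℤ) - a) ((p.1:ℤ) - a) := by
    rw [Finset.sum_product, mul_sum]
    apply sum_congr rfl
    intro k _
    rw [mul_sum]
  rw [hC]
  -- Step D : reindex via the image
  set φ : ℕ × ℕ → ℤ × ℤ := fun p => ((p.2:ℤ) + (p.1:ℤ) - a, (p.1:ℤ) - a) with hφ
  have hinj : ∀ p ∈ (range L) ×ˢ (range (L + 1)), ∀ q ∈ (range L) ×ˢ (range (L + 1)),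
      φ p = φ q → p = q := by
    intro p _ q _ hpq
    rw [hφ] at hpq
    simp only [Prod.mk.injEq] at hpq
    have h1 : (p.1 : ℤ) = q.1 := by omega
    have h2 : (p.2 : ℤ) = q.2 := by omega
    have : p.1 = q.1 := by exact_mod_cast h1
    have : p.2 = q.2 := by exact_mod_cast h2
    exact Prod.ext (by omega) (by omega)
  have hD : ∑ p ∈ (range L) ×ˢ (range (L + 1)), Fb L d ((p.2:ℤ) + (p.1:ℤ) - a) ((p.1:ℤ) - a)
      = ∑ q ∈ ((range L) ×ˢ (range (L + 1))).image φ, Fb L d q.1 q.2 := by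
    rw [Finset.sum_image hinj]
  rw [hD]
  -- Step E : move to the standard box
  set tbox : Finset (ℤ × ℤ) :=
    ((range (L + 1)) ×ˢ (range (L + 1))).image (fun p => ((p.1:ℤ), (p.2:ℤ))) with htbox
  have hE : ∑ q ∈ ((range L) ×ˢ (range (L + 1))).image φ, Fb L d q.1 q.2
      = ∑ q ∈ tbox, Fb L d q.1 q.2 := by
    apply sum_eq_sum_of_support
    · -- q in image φ, not in tbox → 0
      intro q _ hqt
      by_cases hcond : 0 ≤ q.2 ∧ q.2 ≤ q.1 ∧ q.1 ≤ (L:ℤ)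
      · exfalso
        apply hqt
        rw [htbox]
        apply Finset.mem_image.2
        refine ⟨(q.1.toNat, q.2.toNat), ?_, ?_⟩
        · apply Finset.mem_product.2
          constructor <;> (apply mem_range.2; omega)
        · have e1 : ((q.1.toNat : ℕ) : ℤ) = q.1 := by omega
          have e2 : ((q.2.toNat : ℕ) : ℤ) = q.2 := by omega
          exact Prod.ext e1 e2
      · exact Fb_eq_zero (by tauto)
    · -- q in tbox, not in image φ → 0
      intro q hqt hqs
      by_cases hcond : 0 ≤ q.2 ∧ q.2 ≤ q.1 ∧ q.1 ≤ (L:ℤ) ∧ q.2 + d ≤ (L:ℤ) - q.1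
      · exfalso
        apply hqs
        apply Finset.mem_image.2
        refine ⟨((q.2 + a).toNat, (q.1 - q.2).toNat), ?_, ?_⟩
        · apply Finset.mem_product.2
          constructor <;> (apply mem_range.2; omega)
        · have e1 : (((q.2 + a).toNat : ℕ) : ℤ) = q.2 + a := by omega
          have e2 : (((q.1 - q.2).toNat : ℕ) : ℤ) = q.1 - q.2 := by omega
          rw [hφ]
          refine Prod.ext ?_ ?_
          · show ((((q.1 - q.2).toNat : ℕ) : ℤ) + (((q.2 + a).toNat : ℕ) : ℤ) - a) = q.1
            rw [e1, e2]; ring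
          · show ((((q.2 + a).toNat : ℕ) : ℤ) - a) = q.2
            rw [e1]; ring
      · exact Fb_eq_zero (by omega)
  rw [hE]
  -- Step F : back to a double sum over ℕ
  have hF : ∑ q ∈ tbox, Fb L d q.1 q.2
      = ∑ x ∈ range (L + 1), ∑ y ∈ range (L + 1), Fb L d (x:ℤ) (y:ℤ) := by
    rw [htbox]
    rw [Finset.sum_image (by
      intro p _ q _ hpq
      simp only [Prod.mk.injEq, Nat.cast_inj] at hpq
      exact Prod.ext hpq.1 hpq.2)]
    rw [Finset.sum_product]
  rw [hF]
  -- Step G : inner sum via Vlem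
  have hG : ∀ x ∈ range (L + 1), ∑ y ∈ range (L + 1), Fb L d (x:ℤ) (y:ℤ)
      = T ((x:ℤ) * ((x:ℤ) + d)) * (qbin L ((x:ℤ) + d) * qbin L (x:ℤ)) := by
    intro x hx
    have hxL : x ≤ L := by have := mem_range.1 hx; omega
    have c1 : ((L - x : ℕ) : ℤ) = (L:ℤ) - x := by omega
    have split : ∀ y : ℕ, Fb L d (x:ℤ) (y:ℤ)
        = (T ((x:ℤ) * ((x:ℤ) + d)) * qbin (L:ℤ) (x:ℤ)) *
          (T ((y:ℤ) * ((y:ℤ) + d)) * (qbin ((L - x : ℕ):ℤ) ((y:ℤ) + d) * qbin (x:ℤ) (y:ℤ))) := by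
      intro y
      rw [Fb, T_add, c1]
      ring
    rw [sum_congr rfl (fun y _ => split y), ← mul_sum]
    have shrink : ∑ y ∈ range (L + 1),
        T ((y:ℤ) * ((y:ℤ) + d)) * (qbin ((L - x : ℕ):ℤ) ((y:ℤ) + d) * qbin (x:ℤ) (y:ℤ))
        = ∑ y ∈ range (x + 1),
        T ((y:ℤ) * ((y:ℤ) + d)) * (qbin ((L - x : ℕ):ℤ) ((y:ℤ) + d) * qbin (x:ℤ) (y:ℤ)) := by
      symm
      apply Finset.sum_subset (by intro y hy; simp only [mem_range] at *; omega)
      intro y hy hyx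
      rw [qbin_eq_zero_of_gt (show (x:ℤ) < (y:ℤ) by
        simp only [mem_range] at hy hyx; exact_mod_cast (by omega : x < y))]
      ring
    rw [shrink, Vlem x (L - x) d, c1]
    rw [show (L:ℤ) - x + x = (L:ℤ) by ring]
    rw [qbin_symm (L:ℤ) ((x:ℤ) + d)]
    rw [show (L:ℤ) - ((x:ℤ) + d) = (L:ℤ) - x - d by ring]
    ring
  rw [sum_congr rfl hG]
  -- Step H : outer sum via Vlem with M = N = L
  have hH : ∑ x ∈ range (L + 1),
      T ((x:ℤ) * ((x:ℤ) + d)) * (qbin L ((x:ℤ) + d) * qbin L (x:ℤ))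
      = qbin ((L:ℤ) + (L:ℤ)) ((L:ℤ) - d) := Vlem L L d
  rw [hH]
  -- Step I : constants and final form
  rw [show (L:ℤ) + (L:ℤ) = 2 * (L:ℤ) by ring, show (L:ℤ) - d = (L:ℤ) - 2 * a - 1 by rw [hd]; ring]
  congr 1
  congr 1
  linear_combination (-2 : ℤ) * two_tri a
/-- A Laurent polynomial is a polynomial in `q` with nonnegative coefficients. -/
def IsNonneg (x : LaurentPolynomial ℤ) : Prop :=
  ∃ P : Polynomial ℤ, (∀ n, 0 ≤ P.coeff n) ∧ P.toLaurent = x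

/-- The Berkovich–Warnaar transformation:
`∑_{k ≥ 0} O_{L,k}(q) [2k+1 choose k-a]_q = q^{4T(a)} [2L choose L-2a-1]_q`. -/
theorem berkovich_warnaar_transformation (L : ℕ) (hL : 0 < L) (a : ℤ) :
    ∑ᶠ k : ℕ, Opoly L k * qbin (2 * k + 1) ((k : ℤ) - a) =
      T (4 * tri a) * qbin (2 * L) ((L : ℤ) - 2 * a - 1) := by
  rcases le_or_gt 0 a with ha | ha
  · exact main_nonneg L a ha
  · have hb : 0 ≤ -a - 1 := by omega
    have h1 : ∀ k : ℕ, Opoly L k * qbin (2 * k + 1) ((k:ℤ) - a)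
        = Opoly L k * qbin (2 * k + 1) ((k:ℤ) - (-a - 1)) := by
      intro k
      congr 1
      rw [qbin_symm]
      congr 1
      ring
    rw [finsum_congr h1]
    have h2 : (4:ℤ) * tri a = 4 * tri (-a - 1) := by rw [tri_reflect]
    have h3 : qbin (2 * L) ((L:ℤ) - 2 * a - 1) = qbin (2 * L) ((L:ℤ) - 2 * (-a - 1) - 1) := by
      rw [qbin_symm]
      congr 1
      push_cast
      ring
    rw [h2, h3]
    exact main_nonneg L (-a - 1) hb

end
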